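/- Let G be a connected graph and e an edge of G that is not a bridge. Then χ_dom(G) ≤ χ_dom(G − e) + 1. -/

import Mathlib

open SimpleGraph

/-- A coloring is a dominated coloring if every (nonempty) color class is contained
in the open neighborhood of some vertex. -/
def IsDomColoring {V α : Type*} (G : SimpleGraph V) (C : G.Coloring α) : Prop :=
  ∀ c : α, (∃ u, C u = c) → ∃ v, ∀ u, C u = c → G.Adj v u

/-- The dominated chromatic number of a graph: the least number of colors
in a dominated coloring. -/
noncomputable def domChromatic {V : Type*} (G : SimpleGraph V) : ℕ :=
  sInf {n | ∃ C : G.Coloring (Fin n), IsDomColoring G C}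

lemma neighbor_of_reachable {V : Type*} {H : SimpleGraph V} {a b : V}
    (h : H.Reachable a b) (hne : a ≠ b) : ∃ v, H.Adj a v := by
  obtain ⟨p⟩ := h
  cases p with
  | nil => exact absurd rfl hne
  | cons h _ => exact ⟨_, h⟩

/-- From a dominated coloring of `G - e` we get a dominated coloring of `G`
with one extra color. -/
lemma domColoring_of_delete {V : Type*} (G : SimpleGraph V) (a b : V)
    (hab : G.Adj a b) (n : ℕ) (C : (G.deleteEdges {s(a,b)}).Coloring (Fin n))
    (hC : IsDomColoring _ C) :
    ∃ C' : G.Coloring (Fin (n+1)), IsDomColoring G C' := by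
  classical
  have hle : G.deleteEdges {s(a,b)} ≤ G := G.deleteEdges_le _
  set f : V → Fin (n+1) := fun v => if v = b then Fin.last n else (C v).castSucc with hf
  have hvalid : ∀ ⦃x y⦄, G.Adj x y → f x ≠ f y := by
    intro x y hxy h
    simp only [hf] at h
    by_cases hx : x = b
    · by_cases hy : y = b
      · exact (G.ne_of_adj hxy) (hx.trans hy.symm)
      · rw [if_pos hx, if_neg hy] at h
        exact (Fin.castSucc_lt_last (C y)).ne' h
    · by_cases hy : y = b
      · rw [if_neg hx, if_pos hy] at h
        exact (Fin.castSucc_lt_last (C x)).ne h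
      · rw [if_neg hx, if_neg hy] at h
        have hadj : (G.deleteEdges {s(a,b)}).Adj x y := by
          rw [SimpleGraph.deleteEdges_adj]
          refine ⟨hxy, ?_⟩
          simp only [Set.mem_singleton_iff, Sym2.eq_iff]
          rintro (⟨h1, h2⟩ | ⟨h1, h2⟩)
          · exact hy h2
          · exact hx h1
        exact C.valid hadj (Fin.castSucc_injective n h)
  refine ⟨Coloring.mk f (fun {x y} h => hvalid h), ?_⟩
  intro c hc
  by_cases hcl : c = Fin.last n
  · refine ⟨a, fun u hu => ?_⟩
    have hu' : f u = c := hu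
    have hub : u = b := by
      by_contra hub
      simp only [hf, if_neg hub] at hu'
      exact (Fin.castSucc_lt_last (C u)).ne (hcl ▸ hu')
    rw [hub]
    exact hab
  · obtain ⟨c', rfl⟩ := Fin.exists_castSucc_eq.mpr hcl
    obtain ⟨u0, hu0⟩ := hc
    have hu0' : f u0 = c'.castSucc := hu0
    have hu0b : u0 ≠ b := by
      intro hh
      simp only [hf, if_pos hh] at hu0'
      exact (Fin.castSucc_lt_last c').ne' hu0'
    simp only [hf, if_neg hu0b] at hu0'
    obtain ⟨v, hv⟩ := hC c' ⟨u0, Fin.castSucc_injective n hu0'⟩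
    refine ⟨v, fun u hu => ?_⟩
    have hu' : f u = c'.castSucc := hu
    have hub : u ≠ b := by
      intro hh
      simp only [hf, if_pos hh] at hu'
      exact (Fin.castSucc_lt_last c').ne' hu'
    simp only [hf, if_neg hub] at hu'
    exact hle (hv u (Fin.castSucc_injective n hu'))

/-- From a dominated coloring of `G` we get a dominated coloring of `G - e`
with two extra colors, provided the endpoints of `e` remain reachable. -/
lemma domColoring_delete_of {V : Type*} (G : SimpleGraph V) (a b : V)
    (hab : G.Adj a b) (hreach : (G.deleteEdges {s(a,b)}).Reachable a b)
    (k : ℕ) (C : G.Coloring (Fin k)) (hC : IsDomColoring G C) :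
    ∃ C' : (G.deleteEdges {s(a,b)}).Coloring (Fin (k+2)),
      IsDomColoring (G.deleteEdges {s(a,b)}) C' := by
  classical
  have hle : G.deleteEdges {s(a,b)} ≤ G := G.deleteEdges_le _
  have hne : a ≠ b := G.ne_of_adj hab
  set f : V → Fin (k+2) := fun v =>
    if v = a then ⟨k, by omega⟩ else if v = b then ⟨k+1, by omega⟩
      else (C v).castLE (by omega) with hf
  have hfval : ∀ v, v ≠ a → v ≠ b → (f v).val < k := by
    intro v hva hvb
    simp only [hf, if_neg hva, if_neg hvb, Fin.coe_castLE]
    exact (C v).isLt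
  have hfC : ∀ v, v ≠ a → v ≠ b → (f v).val = (C v).val := by
    intro v hva hvb
    simp only [hf, if_neg hva, if_neg hvb, Fin.coe_castLE]
  have hfa : (f a).val = k := by simp [hf]
  have hfb : (f b).val = k + 1 := by simp [hf, hne.symm]
  have hvalid : ∀ ⦃x y⦄, (G.deleteEdges {s(a,b)}).Adj x y → f x ≠ f y := by
    intro x y hxy h
    have hval : (f x).val = (f y).val := congrArg Fin.val h
    have hxyne : x ≠ y := (G.deleteEdges {s(a,b)}).ne_of_adj hxy
    rw [SimpleGraph.deleteEdges_adj] at hxy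
    by_cases hxa : x = a
    · by_cases hyb : y = b
      · exact hxy.2 (by rw [hxa, hyb]; exact Set.mem_singleton _)
      · by_cases hya : y = a
        · exact hxyne (hxa.trans hya.symm)
        · rw [hxa, hfa] at hval
          have := hfval y hya hyb
          omega
    · by_cases hxb : x = b
      · by_cases hya : y = a
        · exact hxy.2 (by rw [hxb, hya, Sym2.eq_swap]; exact Set.mem_singleton _)
        · by_cases hyb : y = b
          · exact hxyne (hxb.trans hyb.symm)
          · rw [hxb, hfb] at hval
            have := hfval y hya hyb
            omega
      · by_cases hya : y = a
        · rw [hya, hfa] at hval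
          have := hfval x hxa hxb
          omega
        · by_cases hyb : y = b
          · rw [hyb, hfb] at hval
            have := hfval x hxa hxb
            omega
          · have h1 := hfC x hxa hxb
            have h2 := hfC y hya hyb
            exact C.valid hxy.1 (Fin.ext (by omega))
  refine ⟨Coloring.mk f (fun {x y} h => hvalid h), ?_⟩
  intro c hc
  rcases lt_trichotomy c.val k with hck | hck | hck
  · -- old color class
    obtain ⟨u0, hu0⟩ := hc
    have hu0' : f u0 = c := hu0
    have hu0a : u0 ≠ a := by
      intro hh; have h2 := congrArg Fin.val hu0'; rw [hh, hfa] at h2; omega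
    have hu0b : u0 ≠ b := by
      intro hh; have h2 := congrArg Fin.val hu0'; rw [hh, hfb] at h2; omega
    have hCu0 : C u0 = ⟨c.val, hck⟩ := by
      have h2 := hfC u0 hu0a hu0b
      rw [hu0'] at h2
      exact Fin.ext h2.symm
    obtain ⟨v, hv⟩ := hC ⟨c.val, hck⟩ ⟨u0, hCu0⟩
    refine ⟨v, fun u hu => ?_⟩
    have hu' : f u = c := hu
    have hua : u ≠ a := by
      intro hh; have h2 := congrArg Fin.val hu'; rw [hh, hfa] at h2; omega
    have hub : u ≠ b := by
      intro hh; have h2 := congrArg Fin.val hu'; rw [hh, hfb] at h2; omega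
    have hCu : C u = ⟨c.val, hck⟩ := by
      have h2 := hfC u hua hub
      rw [hu'] at h2
      exact Fin.ext h2.symm
    have hGvu : G.Adj v u := hv u hCu
    rw [SimpleGraph.deleteEdges_adj]
    refine ⟨hGvu, ?_⟩
    simp only [Set.mem_singleton_iff, Sym2.eq_iff]
    rintro (⟨h1, h2⟩ | ⟨h1, h2⟩)
    · exact hub h2
    · exact hua h2
  · -- color class {a}
    obtain ⟨v, hv⟩ := neighbor_of_reachable hreach hne
    refine ⟨v, fun u hu => ?_⟩
    have hu' : f u = c := hu
    have hval := congrArg Fin.val hu'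
    have hua : u = a := by
      by_contra hua
      by_cases hub : u = b
      · rw [hub, hfb] at hval; omega
      · have := hfval u hua hub; omega
    rw [hua]
    exact hv.symm
  · -- color class {b}
    obtain ⟨v, hv⟩ := neighbor_of_reachable hreach.symm hne.symm
    refine ⟨v, fun u hu => ?_⟩
    have hu' : f u = c := hu
    have hval := congrArg Fin.val hu'
    have hub : u = b := by
      by_contra hub
      by_cases hua : u = a
      · rw [hua, hfa] at hval; omega
      · have := hfval u hua hub
        have hc2 : c.val < k + 2 := c.isLt
        omega
    rw [hub]
    exact hv.symm

theorem domChromatic_le_deleteEdge_add_one {V : Type*} (G : SimpleGraph V) (e : Sym2 V)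
    (hG : G.Connected) (he : e ∈ G.edgeSet) (hb : ¬ G.IsBridge e) :
    domChromatic G ≤ domChromatic (G.deleteEdges {e}) + 1 := by
  revert he hb
  induction e using Sym2.ind with
  | _ a b =>
  intro he hb
  have hab : G.Adj a b := he
  have hreach : (G.deleteEdges {s(a,b)}).Reachable a b := by
    by_contra h
    exact hb (SimpleGraph.isBridge_iff.mpr h)
  rcases Set.eq_empty_or_nonempty
    {n | ∃ C : (G.deleteEdges {s(a,b)}).Coloring (Fin n),
      IsDomColoring (G.deleteEdges {s(a,b)}) C} with hS | hS
  · have hT : {n | ∃ C : G.Coloring (Fin n), IsDomColoring G C} = ∅ := by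
      rw [Set.eq_empty_iff_forall_notMem]
      rintro k ⟨C, hCd⟩
      obtain ⟨C', hC'⟩ := domColoring_delete_of G a b hab hreach k C hCd
      exact Set.eq_empty_iff_forall_notMem.mp hS (k+2) ⟨C', hC'⟩
    rw [domChromatic, hT, Nat.sInf_empty]
    exact Nat.zero_le _
  · obtain ⟨C, hCd⟩ := Nat.sInf_mem hS
    obtain ⟨C', hC'⟩ := domColoring_of_delete G a b hab _ C hCd
    exact Nat.sInf_le ⟨C', hC'⟩
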